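/- Let p, q, r be natural numbers with 2r ≤ p + q. Then for all natural numbers i, j with i + j ≤ r, one has C(p,i)·C(q,j) ≤ max{ C(p,i')·C(q,j') : i' + j' = r }. That is, if r ≤ (p+q)/2 then the largest sublayer X_{i,j} of the ball B_r[p,q] lies on the boundary sphere S_r[p,q]. -/
import Mathlib

lemma choose_step_aux (p i : ℕ) (h : 2 * i + 1 ≤ p) :
    Nat.choose p i ≤ Nat.choose p (i + 1) := by
  have key := Nat.choose_succ_right_eq p i
  have h1 : i + 1 ≤ p - i := by omega
  have h2 : Nat.choose p i * (i + 1) ≤ Nat.choose p (i + 1) * (i + 1) := by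
    rw [key]; exact Nat.mul_le_mul_left _ h1
  exact Nat.le_of_mul_le_mul_right h2 (by omega)

/-- If `2r ≤ p + q`, then every sublayer size `C(p,i) * C(q,j)` with `i + j ≤ r` is at
most the size of the largest layer on the boundary sphere,
`max { C(p,i') * C(q,j') : i' + j' = r }`. -/
theorem stmt_7 (p q r : ℕ) (hr : 2 * r ≤ p + q) (i j : ℕ) (hij : i + j ≤ r) :
    Nat.choose p i * Nat.choose q j ≤
      (Finset.range (r + 1)).sup (fun i' => Nat.choose p i' * Nat.choose q (r - i')) := by
  obtain ⟨d, hd⟩ : ∃ d, r = i + j + d := ⟨r - (i + j), by omega⟩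
  clear hij
  induction d generalizing i j with
  | zero =>
      have hi : i ∈ Finset.range (r + 1) := by simp; omega
      have hj : j = r - i := by omega
      rw [hj]
      exact Finset.le_sup (f := fun i' => Nat.choose p i' * Nat.choose q (r - i')) hi
  | succ d ih =>
      rcases le_or_gt (2 * i + 1) p with h | h
      · calc Nat.choose p i * Nat.choose q j
            ≤ Nat.choose p (i + 1) * Nat.choose q j :=
              Nat.mul_le_mul_right _ (choose_step_aux p i h)
          _ ≤ _ := ih (i + 1) j (by omega)
      · have hq : 2 * j + 1 ≤ q := by omega
        calc Nat.choose p i * Nat.choose q j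
            ≤ Nat.choose p i * Nat.choose q (j + 1) :=
              Nat.mul_le_mul_left _ (choose_step_aux q j hq)
          _ ≤ _ := ih i (j + 1) (by omega)
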